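/- Let $M$ be a real-valued Markov process such that for all $s \le t$ and every bounded 1-Lipschitz function $f$ there exists a 1-Lipschitz function $g$ with $\mathbb{E}[f(M_t) \mid \mathcal{F}_s] = g(M_s)$ almost surely. Then for all $s \le t$ and $x \le y$ in a set of full measure under the law of $M_s$, the transition kernel satisfies $\mathcal{W}_1(\pi^{s,t}_x, \pi^{s,t}_y) \le y - x$. -/

import Mathlib

open MeasureTheory ProbabilityTheory

/-- The Wasserstein-1 distance between two measures on `ℝ`, as the infimum of transport costs
over all couplings. -/
noncomputable def W1 (α β : Measure ℝ) : ENNReal :=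
  sInf { c | ∃ γ : Measure (ℝ × ℝ),
    γ.map Prod.fst = α ∧ γ.map Prod.snd = β ∧ c = ∫⁻ p, edist p.1 p.2 ∂γ }


section Aux

open Set Filter Topology Uniformity

section Quantile

variable (α : Measure ℝ) [IsProbabilityMeasure α]

/-- Quantile function (generalized inverse of the cdf). -/
noncomputable def qf (α : Measure ℝ) (u : ℝ) : ℝ := sInf {x | u ≤ cdf α x}

lemma qf_set_nonempty {u : ℝ} (hu : u < 1) : {x | u ≤ cdf α x}.Nonempty := by
  obtain ⟨x, hx⟩ := ((tendsto_cdf_atTop α).eventually_const_lt hu).exists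
  exact ⟨x, hx.le⟩

lemma qf_set_bddBelow {u : ℝ} (hu : 0 < u) : BddBelow {x | u ≤ cdf α x} := by
  obtain ⟨x₀, hx₀⟩ := ((tendsto_cdf_atBot α).eventually_lt_const hu).exists
  refine ⟨x₀, fun x hx => ?_⟩
  by_contra h
  push_neg at h
  exact absurd (le_trans hx (monotone_cdf α h.le)) (not_le.2 hx₀)

lemma qf_le_iff {u t : ℝ} (hu : u ∈ Ioo (0:ℝ) 1) : qf α u ≤ t ↔ u ≤ cdf α t := by
  constructor
  · intro h
    have hne := qf_set_nonempty α hu.2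
    have hbdd := qf_set_bddBelow α hu.1
    have key : u ≤ cdf α (qf α u) := by
      by_contra hc
      push_neg at hc
      have hrc : ContinuousWithinAt (cdf α) (Ici (qf α u)) (qf α u) :=
        (cdf α).right_continuous (qf α u)
      have hev : ∀ᶠ x in 𝓝[≥] (qf α u), cdf α x < u :=
        hrc (Filter.Tendsto.eventually_lt_const hc (𝓝 (cdf α (qf α u))).tendsto_id)
      rw [Filter.eventually_iff, mem_nhdsGE_iff_exists_Ico_subset] at hev
      obtain ⟨b, hb, hIco⟩ := hev
      rw [Set.mem_Ioi] at hb
      have hlb : qf α u + (b - qf α u) / 2 ≤ qf α u := by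
        apply le_csInf hne
        intro x hx
        have hxq : qf α u ≤ x := csInf_le hbdd hx
        by_contra hxc
        push_neg at hxc
        have : x ∈ Ico (qf α u) b := ⟨hxq, by nlinarith⟩
        have hlt : cdf α x < u := hIco this
        have hge : u ≤ cdf α x := hx
        linarith
      linarith
    exact le_trans key (monotone_cdf α h)
  · intro h
    exact csInf_le (qf_set_bddBelow α hu.1) h

lemma qf_monoOn : MonotoneOn (qf α) (Ioo (0:ℝ) 1) := by
  intro u hu v hv huv
  exact csInf_le_csInf (qf_set_bddBelow α hu.1) (qf_set_nonempty α hv.2)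
    (fun x hx => le_trans huv hx)

lemma map_qf {Q : ℝ → ℝ} (hQ : Measurable Q)
    (hae : Q =ᵐ[volume.restrict (Ioo (0:ℝ) 1)] qf α) :
    Measure.map Q (volume.restrict (Ioo (0:ℝ) 1)) = α := by
  set μ₀ := volume.restrict (Ioo (0:ℝ) 1) with hμ₀
  have hμ₀univ : μ₀ univ = 1 := by
    rw [hμ₀, Measure.restrict_apply MeasurableSet.univ, univ_inter, Real.volume_Ioo]
    norm_num
  haveI : IsProbabilityMeasure (Measure.map Q μ₀) := by
    constructor
    rw [Measure.map_apply hQ MeasurableSet.univ, preimage_univ, hμ₀univ]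
  refine Measure.ext_of_Iic (Measure.map Q μ₀) α (fun t => ?_)
  rw [Measure.map_apply hQ measurableSet_Iic]
  have h1 : μ₀ (Q ⁻¹' Iic t) = μ₀ {u | qf α u ≤ t} := by
    apply measure_congr
    rw [Filter.eventuallyEq_set]
    filter_upwards [hae] with u hu
    simp [Set.mem_preimage, Set.mem_Iic, hu]
  rw [h1, hμ₀, Measure.restrict_apply' measurableSet_Ioo]
  have h2 : {u | qf α u ≤ t} ∩ Ioo (0:ℝ) 1 = Iic (cdf α t) ∩ Ioo (0:ℝ) 1 := by
    ext u
    simp only [mem_inter_iff, mem_setOf_eq, mem_Iic]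
    constructor
    · rintro ⟨h, hu⟩; exact ⟨(qf_le_iff α hu).1 h, hu⟩
    · rintro ⟨h, hu⟩; exact ⟨(qf_le_iff α hu).2 h, hu⟩
  rw [h2]
  have h0 : 0 ≤ cdf α t := cdf_nonneg α t
  have hle1 : cdf α t ≤ 1 := cdf_le_one α t
  have h3 : volume (Iic (cdf α t) ∩ Ioo (0:ℝ) 1) = ENNReal.ofReal (cdf α t) := by
    rcases lt_or_eq_of_le hle1 with hlt | heq
    · have : Iic (cdf α t) ∩ Ioo (0:ℝ) 1 = Ioc 0 (cdf α t) := by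
        ext u
        simp only [mem_inter_iff, mem_Iic, mem_Ioo, mem_Ioc]
        constructor
        · rintro ⟨h, hu1, hu2⟩; exact ⟨hu1, h⟩
        · rintro ⟨hu1, hu2⟩; exact ⟨hu2, hu1, lt_of_le_of_lt hu2 hlt⟩
      rw [this, Real.volume_Ioc, sub_zero]
    · have : Iic (cdf α t) ∩ Ioo (0:ℝ) 1 = Ioo (0:ℝ) 1 := by
        apply inter_eq_self_of_subset_right
        intro u hu
        simp only [mem_Iic]
        rw [heq]
        exact hu.2.le
      rw [this, Real.volume_Ioo, heq]
      norm_num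
  rw [h3, ofReal_cdf]

end Quantile
lemma edist_eq_vol (p q : ℝ) :
    edist p q = volume {t : ℝ | (p ≤ t ∧ t < q) ∨ (q ≤ t ∧ t < p)} := by
  rcases le_total p q with h | h
  · have hs : {t : ℝ | (p ≤ t ∧ t < q) ∨ (q ≤ t ∧ t < p)} = Ico p q := by
      ext t
      simp only [mem_setOf_eq, mem_Ico]
      constructor
      · rintro (⟨h1, h2⟩ | ⟨h1, h2⟩)
        · exact ⟨h1, h2⟩
        · exact absurd (lt_of_le_of_lt (h.trans h1) h2) (lt_irrefl p)
      · intro ht; exact Or.inl ht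
    rw [hs, Real.volume_Ico, edist_dist, Real.dist_eq, abs_of_nonpos (by linarith)]
    ring_nf
  · have hs : {t : ℝ | (p ≤ t ∧ t < q) ∨ (q ≤ t ∧ t < p)} = Ico q p := by
      ext t
      simp only [mem_setOf_eq, mem_Ico]
      constructor
      · rintro (⟨h1, h2⟩ | ⟨h1, h2⟩)
        · exact absurd (lt_of_le_of_lt (h.trans h1) h2) (lt_irrefl q)
        · exact ⟨h1, h2⟩
      · intro ht; exact Or.inr ht
    rw [hs, Real.volume_Ico, edist_dist, Real.dist_eq, abs_of_nonneg (by linarith)]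

lemma vol_Ioc_inter {c d : ℝ} (h0 : 0 ≤ c) (hcd : c ≤ d) (h1 : d ≤ 1) :
    volume (Ioc c d ∩ Ioo (0:ℝ) 1) = ENNReal.ofReal (d - c) := by
  apply le_antisymm
  · calc volume (Ioc c d ∩ Ioo (0:ℝ) 1) ≤ volume (Ioc c d) :=
          measure_mono inter_subset_left
      _ = ENNReal.ofReal (d - c) := Real.volume_Ioc
  · have hsub : Ioo c d ⊆ Ioc c d ∩ Ioo (0:ℝ) 1 := by
      intro u hu
      exact ⟨⟨hu.1, hu.2.le⟩, lt_of_le_of_lt h0 hu.1, lt_of_lt_of_le hu.2 h1⟩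
    calc ENNReal.ofReal (d - c) = volume (Ioo c d) := Real.volume_Ioo.symm
      _ ≤ _ := measure_mono hsub

lemma W1_le_cdf (α β : Measure ℝ) [IsProbabilityMeasure α] [IsProbabilityMeasure β] :
    W1 α β ≤ ∫⁻ t, ENNReal.ofReal |cdf α t - cdf β t| := by
  set μ₀ := volume.restrict (Ioo (0:ℝ) 1) with hμ₀
  have hQa' : AEMeasurable (qf α) μ₀ :=
    aemeasurable_restrict_of_monotoneOn measurableSet_Ioo (qf_monoOn α)
  have hQb' : AEMeasurable (qf β) μ₀ :=
    aemeasurable_restrict_of_monotoneOn measurableSet_Ioo (qf_monoOn β)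
  set Qa := hQa'.mk (qf α) with hQadef
  set Qb := hQb'.mk (qf β) with hQbdef
  have hQam : Measurable Qa := hQa'.measurable_mk
  have hQbm : Measurable Qb := hQb'.measurable_mk
  have haea : Qa =ᵐ[μ₀] qf α := hQa'.ae_eq_mk.symm
  have haeb : Qb =ᵐ[μ₀] qf β := hQb'.ae_eq_mk.symm
  -- the coupling
  set γ : Measure (ℝ × ℝ) := Measure.map (fun u => (Qa u, Qb u)) μ₀ with hγ
  have hpair : Measurable (fun u => (Qa u, Qb u)) := hQam.prodMk hQbm
  have hfst : γ.map Prod.fst = α := by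
    rw [hγ, Measure.map_map measurable_fst hpair]
    exact map_qf α hQam haea
  have hsnd : γ.map Prod.snd = β := by
    rw [hγ, Measure.map_map measurable_snd hpair]
    exact map_qf β hQbm haeb
  have hcost : ∫⁻ p, edist p.1 p.2 ∂γ = ∫⁻ u, edist (Qa u) (Qb u) ∂μ₀ := by
    rw [hγ, lintegral_map (by fun_prop) hpair]
  have hW : W1 α β ≤ ∫⁻ u, edist (Qa u) (Qb u) ∂μ₀ := by
    rw [← hcost]
    exact sInf_le ⟨γ, hfst, hsnd, rfl⟩
  refine hW.trans (le_of_eq ?_)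
  -- rewrite the cost as a double integral
  set A : Set (ℝ × ℝ) :=
    {p : ℝ × ℝ | (Qa p.1 ≤ p.2 ∧ p.2 < Qb p.1) ∨ (Qb p.1 ≤ p.2 ∧ p.2 < Qa p.1)} with hA
  have hAmeas : MeasurableSet A := by
    apply MeasurableSet.union
    · exact (measurableSet_le (hQam.comp measurable_fst) measurable_snd).inter
        (measurableSet_lt measurable_snd (hQbm.comp measurable_fst))
    · exact (measurableSet_le (hQbm.comp measurable_fst) measurable_snd).inter
        (measurableSet_lt measurable_snd (hQam.comp measurable_fst))
  have hstep1 : ∀ u, edist (Qa u) (Qb u) = ∫⁻ t, A.indicator 1 (u, t) := by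
    intro u
    rw [edist_eq_vol]
    have : {t : ℝ | (Qa u ≤ t ∧ t < Qb u) ∨ (Qb u ≤ t ∧ t < Qa u)}
        = {t : ℝ | (u, t) ∈ A} := rfl
    rw [this]
    have hm : MeasurableSet {t : ℝ | (u, t) ∈ A} := hAmeas.preimage (by fun_prop)
    rw [← lintegral_indicator_one hm]
    apply lintegral_congr
    intro t
    by_cases h : (u, t) ∈ A <;> simp [h]
  have hswap : ∫⁻ u, edist (Qa u) (Qb u) ∂μ₀
      = ∫⁻ t, (μ₀ {u | (u, t) ∈ A}) := by
    calc ∫⁻ u, edist (Qa u) (Qb u) ∂μ₀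
        = ∫⁻ u, (∫⁻ t, A.indicator 1 (u, t)) ∂μ₀ := by
          simp only [hstep1]
      _ = ∫⁻ t, ∫⁻ u, A.indicator 1 (u, t) ∂μ₀ := by
          exact lintegral_lintegral_swap (μ := μ₀) (ν := volume)
            (f := fun u t => A.indicator 1 (u, t))
            ((measurable_one.indicator hAmeas).comp measurable_id).aemeasurable
      _ = ∫⁻ t, (μ₀ {u | (u, t) ∈ A}) := by
          apply lintegral_congr
          intro t
          have hm : MeasurableSet {u : ℝ | (u, t) ∈ A} := hAmeas.preimage (by fun_prop)
          rw [← lintegral_indicator_one hm]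
          apply lintegral_congr
          intro u
          by_cases h : (u, t) ∈ A <;> simp [h]
  rw [hswap]
  apply lintegral_congr
  intro t
  -- replace Qa, Qb by qf
  have hcongr : μ₀ {u | (u, t) ∈ A}
      = μ₀ {u | (qf α u ≤ t ∧ t < qf β u) ∨ (qf β u ≤ t ∧ t < qf α u)} := by
    apply measure_congr
    rw [Filter.eventuallyEq_set]
    filter_upwards [haea, haeb] with u h1 h2
    simp only [hA, mem_setOf_eq, h1, h2]
  rw [hcongr, hμ₀, Measure.restrict_apply' measurableSet_Ioo]
  have hkey : {u | (qf α u ≤ t ∧ t < qf β u) ∨ (qf β u ≤ t ∧ t < qf α u)} ∩ Ioo (0:ℝ) 1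
      = (Ioc (cdf β t) (cdf α t) ∪ Ioc (cdf α t) (cdf β t)) ∩ Ioo (0:ℝ) 1 := by
    ext u
    simp only [mem_inter_iff, mem_setOf_eq, mem_union, mem_Ioc, and_congr_left_iff]
    intro hu
    have ha := qf_le_iff α (t := t) hu
    have hb := qf_le_iff β (t := t) hu
    constructor
    · rintro (⟨h1, h2⟩ | ⟨h1, h2⟩)
      · exact Or.inl ⟨not_le.1 fun hc => absurd (hb.2 hc) (not_le.2 h2), ha.1 h1⟩
      · exact Or.inr ⟨not_le.1 fun hc => absurd (ha.2 hc) (not_le.2 h2), hb.1 h1⟩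
    · rintro (⟨h1, h2⟩ | ⟨h1, h2⟩)
      · exact Or.inl ⟨ha.2 h2, not_le.1 fun hc => absurd (hb.1 hc) (not_le.2 h1)⟩
      · exact Or.inr ⟨hb.2 h2, not_le.1 fun hc => absurd (ha.1 hc) (not_le.2 h1)⟩
  rw [hkey]
  rcases le_total (cdf β t) (cdf α t) with hle | hle
  · rw [Ioc_eq_empty (not_lt.2 hle), union_empty,
      vol_Ioc_inter (cdf_nonneg β t) hle (cdf_le_one α t),
      abs_of_nonneg (by linarith)]
  · rw [Ioc_eq_empty (not_lt.2 hle), empty_union,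
      vol_Ioc_inter (cdf_nonneg α t) hle (cdf_le_one β t),
      abs_of_nonpos (by linarith)]
    ring_nf
noncomputable def clamp (r : ℝ) : ℝ := max (-1) (min 1 r)

lemma clamp_abs_le (r : ℝ) : |clamp r| ≤ 1 := by
  rw [abs_le]
  exact ⟨le_max_left _ _, max_le (by norm_num) (min_le_left _ _)⟩

lemma continuous_clamp : Continuous clamp :=
  continuous_const.max (continuous_const.min continuous_id)

lemma clamp_zero : clamp 0 = 0 := by norm_num [clamp]

lemma clamp_sub_le (a b : ℝ) : |clamp a - clamp b| ≤ |a - b| := by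
  unfold clamp
  rw [max_comm (-1) (min 1 a), max_comm (-1) (min 1 b)]
  calc |max (min 1 a) (-1) - max (min 1 b) (-1)| ≤ |min 1 a - min 1 b| :=
        abs_max_sub_max_le_abs _ _ _
    _ ≤ max |(1:ℝ) - 1| |a - b| := abs_min_sub_min_le_max _ _ _ _
    _ = |a - b| := by simp

lemma clamp_of_abs_le {r : ℝ} (h : |r| ≤ 1) : clamp r = r := by
  rw [abs_le] at h
  rw [clamp, min_eq_right h.2, max_eq_right h.1]

/-- A countable dense subset of `C(ℝ, ℝ)`. -/
noncomputable def Dset : Set C(ℝ, ℝ) :=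
  (TopologicalSpace.exists_countable_dense C(ℝ, ℝ)).choose

lemma Dset_countable : Dset.Countable :=
  (TopologicalSpace.exists_countable_dense C(ℝ, ℝ)).choose_spec.1

lemma Dset_dense : Dense Dset :=
  (TopologicalSpace.exists_countable_dense C(ℝ, ℝ)).choose_spec.2

lemma Dset_approx (g : C(ℝ, ℝ)) {K : Set ℝ} (hK : IsCompact K) {δ : ℝ} (hδ : 0 < δ) :
    ∃ d ∈ Dset, ∀ x ∈ K, |(d : ℝ → ℝ) x - g x| < δ := by
  have hb : (𝓝 g).HasBasis
      (fun p : Set ℝ × Set (ℝ × ℝ) => IsCompact p.1 ∧ p.2 ∈ 𝓤 ℝ)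
      (fun p => UniformSpace.ball g
        {fg : C(ℝ, ℝ) × C(ℝ, ℝ) | ∀ x ∈ p.1, (fg.1 x, fg.2 x) ∈ p.2}) :=
    nhds_basis_uniformity' ContinuousMap.hasBasis_compactConvergenceUniformity
  have hg : g ∈ closure Dset := Dset_dense g
  rw [mem_closure_iff_nhds_basis hb] at hg
  obtain ⟨d, hd, hball⟩ := hg ⟨K, {p : ℝ × ℝ | dist p.1 p.2 < δ}⟩
    ⟨hK, Metric.dist_mem_uniformity hδ⟩
  refine ⟨d, hd, fun x hx => ?_⟩
  have := hball x hx
  simpa [Real.dist_eq, abs_sub_comm] using this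

/-- The countable family of test "derivatives". -/
noncomputable def Phi : Set (ℝ → ℝ) :=
  ⋃ d ∈ Dset, ⋃ (a : ℚ), ⋃ (b : ℚ),
    {fun z => (Set.Ioc (a:ℝ) (b:ℝ)).indicator (fun w => clamp (d w)) z}

lemma Phi_countable : Phi.Countable :=
  Dset_countable.biUnion (fun d _ => Set.countable_iUnion
    (fun _ => Set.countable_iUnion (fun _ => Set.countable_singleton _)))

lemma Phi_spec {φ : ℝ → ℝ} (hφ : φ ∈ Phi) :
    Measurable φ ∧ (∀ z, |φ z| ≤ 1) ∧ ∃ a b : ℝ, ∀ z, z ∉ Set.Ioc a b → φ z = 0 := by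
  simp only [Phi, mem_iUnion, mem_singleton_iff] at hφ
  obtain ⟨d, hd, a, b, rfl⟩ := hφ
  refine ⟨((continuous_clamp.comp d.continuous).measurable).indicator measurableSet_Ioc,
    fun z => ?_, a, b, fun z hz => indicator_of_notMem hz _⟩
  simp only []
  by_cases hz : z ∈ Set.Ioc (a:ℝ) (b:ℝ)
  · rw [Set.indicator_of_mem hz]; exact clamp_abs_le _
  · rw [Set.indicator_of_notMem hz]; norm_num

lemma integrable_dom {f : ℝ → ℝ} (hf : AEStronglyMeasurable f volume) {A B C : ℝ}
    (hbd : ∀ z, |f z| ≤ (Set.Ioc A B).indicator (fun _ => C) z) :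
    Integrable f volume := by
  refine Integrable.mono' ((integrable_indicator_iff measurableSet_Ioc).2 ?_) hf
    (ae_of_all _ (fun z => by simpa [Real.norm_eq_abs] using hbd z))
  exact integrableOn_const measure_Ioc_lt_top.ne

lemma Phi_approx {ψ : ℝ → ℝ} (hm : Measurable ψ) (h1 : ∀ z, |ψ z| ≤ 1)
    {A B : ℝ} (hsupp : ∀ z, z ∉ Set.Ioc A B → ψ z = 0) {ε : ℝ} (hε : 0 < ε) :
    ∃ φ ∈ Phi, Integrable (fun z => |φ z - ψ z|) volume ∧ ∫ z, |φ z - ψ z| ≤ ε := by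
  have hψbd : ∀ z, |ψ z| ≤ (Set.Ioc A B).indicator (fun _ => (1:ℝ)) z := by
    intro z
    by_cases hz : z ∈ Set.Ioc A B
    · rw [indicator_of_mem hz]; exact h1 z
    · rw [indicator_of_notMem hz, hsupp z hz]; norm_num
  have hψint : Integrable ψ volume := integrable_dom hm.aestronglyMeasurable hψbd
  obtain ⟨g, hgsupp, hgclose, hgcont, hgint⟩ :=
    hψint.exists_hasCompactSupport_integral_sub_le (half_pos hε)
  -- clamp g
  set g' : ℝ → ℝ := fun z => clamp (g z) with hg'
  have hg'cont : Continuous g' := continuous_clamp.comp hgcont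
  have hg'supp : HasCompactSupport g' := hgsupp.comp_left clamp_zero
  have hg'int : Integrable g' volume := hg'cont.integrable_of_hasCompactSupport hg'supp
  have hg'close : ∀ z, |g' z - ψ z| ≤ ‖ψ z - g z‖ := by
    intro z
    rw [Real.norm_eq_abs, abs_sub_comm (ψ z)]
    calc |g' z - ψ z| = |clamp (g z) - clamp (ψ z)| := by rw [clamp_of_abs_le (h1 z)]
      _ ≤ |g z - ψ z| := clamp_sub_le _ _
  -- support bound
  obtain ⟨r, hr⟩ := hg'supp.isBounded.subset_closedBall 0
  have hrsub : tsupport g' ⊆ Icc (-(max r 0)) (max r 0) := by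
    intro z hz
    have := hr hz
    rw [Real.closedBall_eq_Icc] at this
    constructor
    · calc -(max r 0) ≤ -r := by simp
        _ = 0 - r := by ring
        _ ≤ z := this.1
    · calc z ≤ 0 + r := this.2
        _ = r := by ring
        _ ≤ max r 0 := le_max_left _ _
  set r0 : ℝ := max r 0 with hr0
  have h0r : (0:ℝ) ≤ r0 := le_max_right r 0
  obtain ⟨a, ha⟩ := exists_rat_lt (-r0 - 1)
  obtain ⟨b, hb⟩ := exists_rat_gt (r0 + 1)
  have hab : (a:ℝ) < b := by linarith
  set δ : ℝ := ε / (2 * ((b:ℝ) - a)) with hδdef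
  have hδpos : 0 < δ := div_pos hε (by linarith)
  obtain ⟨d, hd, hdapp⟩ := Dset_approx ⟨g', hg'cont⟩
    (isCompact_Icc (a := (a:ℝ)) (b := (b:ℝ))) hδpos
  set φ : ℝ → ℝ := fun z => (Set.Ioc (a:ℝ) (b:ℝ)).indicator (fun w => clamp (d w)) z
    with hφdef
  have hφPhi : φ ∈ Phi := by
    simp only [Phi, mem_iUnion, mem_singleton_iff]
    exact ⟨d, hd, a, b, rfl⟩
  have hφmeas : Measurable φ := (Phi_spec hφPhi).1
  have hg'z : ∀ z, z ∉ Set.Ioc (a:ℝ) (b:ℝ) → g' z = 0 := by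
    intro z hz
    apply image_eq_zero_of_notMem_tsupport
    intro hmem
    exact hz ⟨by have := (hrsub hmem).1; linarith, by have := (hrsub hmem).2; linarith⟩
  have hφg' : ∀ z, |φ z - g' z| ≤ (Set.Ioc (a:ℝ) b).indicator (fun _ => δ) z := by
    intro z
    by_cases hz : z ∈ Set.Ioc (a:ℝ) (b:ℝ)
    · rw [hφdef]
      simp only []
      rw [Set.indicator_of_mem hz, Set.indicator_of_mem hz]
      have hg'1 : |g' z| ≤ 1 := clamp_abs_le _
      calc |clamp (d z) - g' z| = |clamp (d z) - clamp (g' z)| := by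
            rw [clamp_of_abs_le hg'1]
        _ ≤ |d z - g' z| := clamp_sub_le _ _
        _ ≤ δ := (hdapp z ⟨hz.1.le, hz.2⟩).le
    · rw [hφdef]
      simp only []
      rw [Set.indicator_of_notMem hz, Set.indicator_of_notMem hz, hg'z z hz]
      norm_num
  have hφbd : ∀ z, |φ z| ≤ (Set.Ioc (a:ℝ) (b:ℝ)).indicator (fun _ => (1:ℝ)) z := by
    intro z
    by_cases hz : z ∈ Set.Ioc (a:ℝ) (b:ℝ)
    · rw [Set.indicator_of_mem hz]; exact (Phi_spec hφPhi).2.1 z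
    · rw [Set.indicator_of_notMem hz]
      have := (Phi_spec hφPhi).2.2
      rw [hφdef]
      simp only []
      rw [Set.indicator_of_notMem hz]
      norm_num
  have hφint : Integrable φ volume := integrable_dom hφmeas.aestronglyMeasurable hφbd
  have hφg'int : Integrable (fun z => |φ z - g' z|) volume := (hφint.sub hg'int).abs
  have hg'ψint : Integrable (fun z => |g' z - ψ z|) volume := (hg'int.sub hψint).abs
  have int1 : ∫ z, |φ z - g' z| ≤ δ * ((b:ℝ) - a) := by
    calc ∫ z, |φ z - g' z|
        ≤ ∫ z, (Set.Ioc (a:ℝ) b).indicator (fun _ => δ) z :=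
          integral_mono hφg'int ((integrable_indicator_iff measurableSet_Ioc).2
            (integrableOn_const measure_Ioc_lt_top.ne)) hφg'
      _ = (volume (Set.Ioc (a:ℝ) b)).toReal • δ := integral_indicator_const _ measurableSet_Ioc
      _ = δ * ((b:ℝ) - a) := by
          rw [Real.volume_Ioc, ENNReal.toReal_ofReal (by linarith), smul_eq_mul]
          ring
  have int2 : ∫ z, |g' z - ψ z| ≤ ε / 2 := by
    calc ∫ z, |g' z - ψ z| ≤ ∫ z, ‖ψ z - g z‖ :=
          integral_mono hg'ψint (hψint.sub hgint).norm hg'close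
      _ ≤ ε / 2 := hgclose
  refine ⟨φ, hφPhi, (hφint.sub hψint).abs, ?_⟩
  have htri : ∀ z, |φ z - ψ z| ≤ |φ z - g' z| + |g' z - ψ z| := fun z => abs_sub_le _ _ _
  calc ∫ z, |φ z - ψ z|
      ≤ ∫ z, (|φ z - g' z| + |g' z - ψ z|) :=
        integral_mono (hφint.sub hψint).abs (hφg'int.add hg'ψint) htri
    _ = (∫ z, |φ z - g' z|) + ∫ z, |g' z - ψ z| := integral_add hφg'int hg'ψint
    _ ≤ δ * ((b:ℝ) - a) + ε / 2 := add_le_add int1 int2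
    _ ≤ ε := by
        have hne : (b:ℝ) - a ≠ 0 := by linarith
        have : δ * ((b:ℝ) - a) = ε / 2 := by
          rw [hδdef]; field_simp
        linarith
section Gf

variable {φ : ℝ → ℝ} {a b : ℝ}

/-- Primitive of `φ`, written as an integral against an indicator. -/
noncomputable def Gf (φ : ℝ → ℝ) (z : ℝ) : ℝ :=
  ∫ s, φ s * (Set.Ioi s).indicator (fun _ => (1:ℝ)) z

lemma ind_comm (z s : ℝ) :
    (Set.Ioi s).indicator (fun _ => (1:ℝ)) z = (Set.Iio z).indicator (fun _ => (1:ℝ)) s := by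
  by_cases h : s < z
  · rw [indicator_of_mem (mem_Ioi.2 h), indicator_of_mem (mem_Iio.2 h)]
  · rw [indicator_of_notMem (fun hc => h (mem_Ioi.1 hc)),
      indicator_of_notMem (fun hc => h (mem_Iio.1 hc))]

variable (hφm : Measurable φ) (hφ1 : ∀ z, |φ z| ≤ 1)
  (hφsupp : ∀ z, z ∉ Set.Ioc a b → φ z = 0)

include hφ1 hφsupp in
lemma phi_bd : ∀ z, |φ z| ≤ (Set.Ioc a b).indicator (fun _ => (1:ℝ)) z := by
  intro z
  by_cases hz : z ∈ Set.Ioc a b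
  · rw [indicator_of_mem hz]; exact hφ1 z
  · rw [indicator_of_notMem hz, hφsupp z hz]; norm_num

include hφm hφ1 hφsupp in
lemma Gf_integrand_int (z : ℝ) :
    Integrable (fun s => φ s * (Set.Ioi s).indicator (fun _ => (1:ℝ)) z) volume := by
  apply integrable_dom (A := a) (B := b) (C := 1)
  · apply Measurable.aestronglyMeasurable
    have : (fun s => φ s * (Set.Ioi s).indicator (fun _ => (1:ℝ)) z)
        = fun s => φ s * (Set.Iio z).indicator (fun _ => (1:ℝ)) s := by
      funext s; rw [ind_comm]
    rw [this]
    exact hφm.mul (measurable_one.indicator measurableSet_Iio)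
  · intro s
    calc |φ s * (Set.Ioi s).indicator (fun _ => (1:ℝ)) z|
        = |φ s| * |(Set.Ioi s).indicator (fun _ => (1:ℝ)) z| := abs_mul _ _
      _ ≤ |φ s| * 1 := by
          apply mul_le_mul_of_nonneg_left _ (abs_nonneg _)
          by_cases h : z ∈ Set.Ioi s
          · rw [indicator_of_mem h]; norm_num
          · rw [indicator_of_notMem h]; norm_num
      _ = |φ s| := mul_one _
      _ ≤ _ := phi_bd hφ1 hφsupp s

include hφm hφ1 hφsupp in
lemma Gf_sub_le {w z : ℝ} (hwz : w ≤ z) : |Gf φ z - Gf φ w| ≤ z - w := by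
  · have key : Gf φ z - Gf φ w = ∫ s, φ s * (Set.Ico w z).indicator (fun _ => (1:ℝ)) s := by
      rw [Gf, Gf, ← integral_sub (Gf_integrand_int hφm hφ1 hφsupp z)
        (Gf_integrand_int hφm hφ1 hφsupp w)]
      congr 1
      funext s
      rw [← mul_sub]
      congr 1
      by_cases h1 : s < w
      · rw [indicator_of_mem (mem_Ioi.2 (lt_of_lt_of_le h1 hwz)),
          indicator_of_mem (mem_Ioi.2 h1),
          indicator_of_notMem (fun hc : s ∈ Set.Ico w z => absurd hc.1 (not_le.2 h1))]
        norm_num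
      · push_neg at h1
        by_cases h2 : s < z
        · rw [indicator_of_mem (mem_Ioi.2 h2),
            indicator_of_notMem (fun hc : w ∈ Set.Ioi s => absurd (mem_Ioi.1 hc) (not_lt.2 h1)),
            indicator_of_mem (show s ∈ Set.Ico w z from ⟨h1, h2⟩)]
          norm_num
        · push_neg at h2
          rw [indicator_of_notMem (fun hc : z ∈ Set.Ioi s => absurd (mem_Ioi.1 hc) (not_lt.2 h2)),
            indicator_of_notMem
              (fun hc : w ∈ Set.Ioi s => absurd (mem_Ioi.1 hc) (not_lt.2 (hwz.trans h2))),
            indicator_of_notMem (fun hc : s ∈ Set.Ico w z => absurd hc.2 (not_lt.2 h2))]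
          norm_num
    have hint : Integrable (fun s => φ s * (Set.Ico w z).indicator (fun _ => (1:ℝ)) s) volume := by
      apply integrable_dom (A := a) (B := b) (C := 1)
        (hφm.mul (measurable_one.indicator measurableSet_Ico)).aestronglyMeasurable
      intro s
      calc |φ s * (Set.Ico w z).indicator (fun _ => (1:ℝ)) s|
          ≤ |φ s| * 1 := by
            rw [abs_mul]
            apply mul_le_mul_of_nonneg_left _ (abs_nonneg _)
            by_cases h : s ∈ Set.Ico w z
            · rw [indicator_of_mem h]; norm_num
            · rw [indicator_of_notMem h]; norm_num
        _ = |φ s| := mul_one _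
        _ ≤ _ := phi_bd hφ1 hφsupp s
    have hind : Integrable (fun s => (Set.Ico w z).indicator (fun _ => (1:ℝ)) s) volume :=
      (integrable_indicator_iff measurableSet_Ico).2
        (integrableOn_const measure_Ico_lt_top.ne)
    calc |Gf φ z - Gf φ w| = |∫ s, φ s * (Set.Ico w z).indicator (fun _ => (1:ℝ)) s| := by
          rw [key]
      _ ≤ ∫ s, |φ s * (Set.Ico w z).indicator (fun _ => (1:ℝ)) s| := by
          simpa only [Real.norm_eq_abs] using norm_integral_le_integral_norm (μ := volume)
            (fun s => φ s * (Set.Ico w z).indicator (fun _ => (1:ℝ)) s)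
      _ ≤ ∫ s, (Set.Ico w z).indicator (fun _ => (1:ℝ)) s := by
          apply integral_mono hint.abs hind
          intro s
          dsimp only
          rw [abs_mul]
          by_cases h : s ∈ Set.Ico w z
          · rw [indicator_of_mem h]
            calc |φ s| * |(1:ℝ)| ≤ 1 * 1 := by
                  apply mul_le_mul (hφ1 s) (by norm_num) (abs_nonneg _) (by norm_num)
              _ = 1 := by norm_num
          · rw [indicator_of_notMem h]
            simp
      _ = z - w := by
          rw [integral_indicator_const _ measurableSet_Ico, measureReal_def, Real.volume_Ico,
            ENNReal.toReal_ofReal (by linarith), smul_eq_mul, mul_one]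
include hφm hφ1 hφsupp in
lemma Gf_lip : LipschitzWith 1 (Gf φ) := by
  apply LipschitzWith.of_dist_le_mul
  intro z w
  rw [NNReal.coe_one, one_mul, Real.dist_eq, Real.dist_eq]
  rcases le_total w z with hwz | hwz
  · calc |Gf φ z - Gf φ w| ≤ z - w := Gf_sub_le hφm hφ1 hφsupp hwz
      _ ≤ |z - w| := by
        rw [abs_of_nonneg (by linarith)]
  · calc |Gf φ z - Gf φ w| = |Gf φ w - Gf φ z| := abs_sub_comm _ _
      _ ≤ w - z := Gf_sub_le hφm hφ1 hφsupp hwz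
      _ ≤ |z - w| := by
        rw [abs_of_nonpos (by linarith)]
        linarith

include hφm hφ1 hφsupp in
lemma Gf_bdd : ∀ z, |Gf φ z| ≤ (volume (Set.Ioc a b)).toReal := by
  intro z
  have hind : Integrable (fun s => (Set.Ioc a b).indicator (fun _ => (1:ℝ)) s) volume :=
    (integrable_indicator_iff measurableSet_Ioc).2
      (integrableOn_const measure_Ioc_lt_top.ne)
  calc |Gf φ z| ≤ ∫ s, |φ s * (Set.Ioi s).indicator (fun _ => (1:ℝ)) z| := by
        simpa only [Gf, Real.norm_eq_abs] using norm_integral_le_integral_norm (μ := volume)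
          (fun s => φ s * (Set.Ioi s).indicator (fun _ => (1:ℝ)) z)
    _ ≤ ∫ s, (Set.Ioc a b).indicator (fun _ => (1:ℝ)) s := by
        apply integral_mono (Gf_integrand_int hφm hφ1 hφsupp z).abs hind
        intro s
        dsimp only
        rw [abs_mul]
        calc |φ s| * |(Set.Ioi s).indicator (fun _ => (1:ℝ)) z| ≤ |φ s| * 1 := by
              apply mul_le_mul_of_nonneg_left _ (abs_nonneg _)
              by_cases h : z ∈ Set.Ioi s
              · rw [indicator_of_mem h]; norm_num
              · rw [indicator_of_notMem h]; norm_num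
          _ = |φ s| := mul_one _
          _ ≤ _ := phi_bd hφ1 hφsupp s
    _ = (volume (Set.Ioc a b)).toReal := by
        rw [integral_indicator_const _ measurableSet_Ioc, smul_eq_mul, mul_one, measureReal_def]

include hφm hφ1 hφsupp in
lemma Gf_range_bdd : Bornology.IsBounded (Set.range (Gf φ)) := by
  apply (Metric.isBounded_Icc (-(volume (Set.Ioc a b)).toReal) ((volume (Set.Ioc a b)).toReal)).subset
  rintro _ ⟨z, rfl⟩
  have := abs_le.1 (Gf_bdd hφm hφ1 hφsupp z)
  exact ⟨this.1, this.2⟩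

lemma toReal_Ioi (α : Measure ℝ) [IsProbabilityMeasure α] (s : ℝ) :
    (α (Set.Ioi s)).toReal = 1 - cdf α s := by
  rw [← Set.compl_Iic, measure_compl measurableSet_Iic (measure_ne_top α _), measure_univ,
    ← ofReal_cdf α s,
    ENNReal.toReal_sub_of_le (ENNReal.ofReal_le_one.2 (cdf_le_one α s)) ENNReal.one_ne_top,
    ENNReal.toReal_one, ENNReal.toReal_ofReal (cdf_nonneg α s)]

include hφm hφ1 hφsupp in
lemma Gf_integral (α : Measure ℝ) [IsProbabilityMeasure α] :
    ∫ z, Gf φ z ∂α = ∫ s, φ s * (1 - cdf α s) := by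
  set F : ℝ × ℝ → ℝ := fun p => φ p.2 * (Set.Ioi p.2).indicator (fun _ => (1:ℝ)) p.1 with hF
  have hindrw : (fun p : ℝ × ℝ => (Set.Ioi p.2).indicator (fun _ => (1:ℝ)) p.1)
      = fun p : ℝ × ℝ => ({q : ℝ × ℝ | q.2 < q.1}).indicator (fun _ => (1:ℝ)) p := by
    funext p
    simp only [Set.indicator_apply, Set.mem_Ioi, Set.mem_setOf_eq]
  have hFm : AEStronglyMeasurable F (α.prod volume) := by
    apply Measurable.aestronglyMeasurable
    apply (hφm.comp measurable_snd).mul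
    rw [hindrw]
    exact measurable_one.indicator (measurableSet_lt measurable_snd measurable_fst)
  have hind : Integrable (fun s => (Set.Ioc a b).indicator (fun _ => (1:ℝ)) s) volume :=
    (integrable_indicator_iff measurableSet_Ioc).2
      (integrableOn_const measure_Ioc_lt_top.ne)
  have hFint : Integrable F (α.prod volume) := by
    rw [integrable_prod_iff hFm]
    constructor
    · exact ae_of_all _ (fun z => Gf_integrand_int hφm hφ1 hφsupp z)
    · apply Integrable.mono' (integrable_const ((volume (Set.Ioc a b)).toReal))
      · exact hFm.norm.integral_prod_right'
      · apply ae_of_all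
        intro z
        rw [Real.norm_eq_abs,
          abs_of_nonneg (integral_nonneg (fun s => norm_nonneg _))]
        calc ∫ s, ‖F (z, s)‖
            ≤ ∫ s, (Set.Ioc a b).indicator (fun _ => (1:ℝ)) s := by
              apply integral_mono (Gf_integrand_int hφm hφ1 hφsupp z).norm hind
              intro s
              dsimp only
              rw [Real.norm_eq_abs, abs_mul]
              calc |φ s| * |(Set.Ioi s).indicator (fun _ => (1:ℝ)) z| ≤ |φ s| * 1 := by
                    apply mul_le_mul_of_nonneg_left _ (abs_nonneg _)
                    by_cases h : z ∈ Set.Ioi s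
                    · rw [indicator_of_mem h]; norm_num
                    · rw [indicator_of_notMem h]; norm_num
                _ = |φ s| := mul_one _
                _ ≤ _ := phi_bd hφ1 hφsupp s
          _ = (volume (Set.Ioc a b)).toReal := by
              rw [integral_indicator_const _ measurableSet_Ioc, smul_eq_mul, mul_one, measureReal_def]
  calc ∫ z, Gf φ z ∂α
      = ∫ s, (∫ z, φ s * (Set.Ioi s).indicator (fun _ => (1:ℝ)) z ∂α) := by
        exact integral_integral_swap
          (f := fun z s => φ s * (Set.Ioi s).indicator (fun _ => (1:ℝ)) z) hFint
    _ = ∫ s, φ s * (α (Set.Ioi s)).toReal := by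
        congr 1
        funext s
        rw [integral_const_mul, integral_indicator_const _ measurableSet_Ioi, smul_eq_mul, mul_one, measureReal_def]
    _ = ∫ s, φ s * (1 - cdf α s) := by
        congr 1
        funext s
        rw [toReal_Ioi]

include hφm hφ1 hφsupp in
lemma Gf_cdf_integrable (α : Measure ℝ) [IsProbabilityMeasure α] :
    Integrable (fun s => φ s * (1 - cdf α s)) volume := by
  apply integrable_dom (A := a) (B := b) (C := 1)
  · exact (hφm.mul (measurable_const.sub (monotone_cdf α).measurable)).aestronglyMeasurable
  · intro s
    rw [abs_mul]
    calc |φ s| * |1 - cdf α s| ≤ |φ s| * 1 := by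
          apply mul_le_mul_of_nonneg_left _ (abs_nonneg _)
          rw [abs_le]
          have h1 := cdf_nonneg α s
          have h2 := cdf_le_one α s
          constructor <;> linarith
      _ = |φ s| := mul_one _
      _ ≤ _ := phi_bd hφ1 hφsupp s

include hφm hφ1 hφsupp in
lemma Gf_diff (α β : Measure ℝ) [IsProbabilityMeasure α] [IsProbabilityMeasure β] :
    (∫ z, Gf φ z ∂α) - ∫ z, Gf φ z ∂β = ∫ s, φ s * (cdf β s - cdf α s) := by
  rw [Gf_integral hφm hφ1 hφsupp α, Gf_integral hφm hφ1 hφsupp β,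
    ← integral_sub (Gf_cdf_integrable hφm hφ1 hφsupp α) (Gf_cdf_integrable hφm hφ1 hφsupp β)]
  congr 1
  funext s
  ring

end Gf

lemma l1_bound (α β : Measure ℝ) [IsProbabilityMeasure α] [IsProbabilityMeasure β] {c : ℝ}
    (hc0 : 0 ≤ c)
    (hc : ∀ φ ∈ Phi, |∫ s, φ s * (cdf β s - cdf α s)| ≤ c) :
    ∫⁻ t, ENNReal.ofReal |cdf α t - cdf β t| ≤ ENNReal.ofReal c := by
  set h0 : ℝ → ℝ := fun t => cdf α t - cdf β t with hh0
  have hmeas : Measurable h0 := (monotone_cdf α).measurable.sub (monotone_cdf β).measurable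
  have habs : ∀ t, |h0 t| ≤ 1 := by
    intro t
    have h1 := cdf_nonneg α t
    have h2 := cdf_le_one α t
    have h3 := cdf_nonneg β t
    have h4 := cdf_le_one β t
    rw [hh0, abs_le]
    constructor <;> simp <;> linarith
  -- reduce to bounded intervals
  have key : ∀ n : ℕ, ∫⁻ t in Set.Ioc (-(n:ℝ)) n, ENNReal.ofReal |h0 t| ≤ ENNReal.ofReal c := by
    intro n
    have hint : IntegrableOn (fun t => |h0 t|) (Set.Ioc (-(n:ℝ)) n) volume := by
      apply Integrable.mono' (integrableOn_const (C := (1:ℝ)) measure_Ioc_lt_top.ne)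
        (hmeas.abs.aestronglyMeasurable.restrict)
      exact ae_of_all _ (fun t => by rw [Real.norm_eq_abs, abs_abs]; exact habs t)
    rw [← ofReal_integral_eq_lintegral_ofReal hint (ae_of_all _ (fun t => abs_nonneg _))]
    apply ENNReal.ofReal_le_ofReal
    -- the real bound
    by_contra hcon
    push_neg at hcon
    set X := ∫ t in Set.Ioc (-(n:ℝ)) n, |h0 t| with hX
    set ε := (X - c) / 2 with hε
    have hεpos : 0 < ε := by rw [hε]; linarith
    -- choose ψ and approximate
    set ψ : ℝ → ℝ :=
      fun w => (Set.Ioc (-(n:ℝ)) n).indicator (fun w => if 0 ≤ h0 w then 1 else -1) w with hψ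
    have hψm : Measurable ψ :=
      (Measurable.ite (measurableSet_le measurable_const hmeas)
        measurable_const measurable_const).indicator measurableSet_Ioc
    have hψ1 : ∀ z, |ψ z| ≤ 1 := by
      intro z
      rw [hψ]
      by_cases hz : z ∈ Set.Ioc (-(n:ℝ)) n
      · simp only [Set.indicator_of_mem hz]
        by_cases h : 0 ≤ h0 z <;> simp [h]
      · simp only [Set.indicator_of_notMem hz]; norm_num
    have hψsupp : ∀ z, z ∉ Set.Ioc (-(n:ℝ)) n → ψ z = 0 :=
      fun z hz => Set.indicator_of_notMem hz _
    have hψh : ∀ t, ψ t * h0 t = (Set.Ioc (-(n:ℝ)) n).indicator (fun w => |h0 w|) t := by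
      intro t
      by_cases ht : t ∈ Set.Ioc (-(n:ℝ)) n
      · rw [hψ]
        simp only [Set.indicator_of_mem ht]
        by_cases h : 0 ≤ h0 t
        · rw [if_pos h, one_mul, abs_of_nonneg h]
        · rw [if_neg h, abs_of_neg (not_le.1 h)]; ring
      · rw [hψsupp t ht, Set.indicator_of_notMem ht, zero_mul]
    obtain ⟨φ, hφPhi, hφψint, hφψ⟩ := Phi_approx hψm hψ1 hψsupp hεpos
    obtain ⟨hφm, hφ1, a, b, hφsupp⟩ := Phi_spec hφPhi
    -- integrabilities
    have iψ : Integrable (fun t => ψ t * h0 t) volume := by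
      apply integrable_dom (A := -(n:ℝ)) (B := n) (C := 1)
        ((hψm.mul hmeas).aestronglyMeasurable)
      intro t
      rw [Pi.mul_apply, abs_mul]
      by_cases ht : t ∈ Set.Ioc (-(n:ℝ)) n
      · rw [Set.indicator_of_mem ht]
        calc |ψ t| * |h0 t| ≤ 1 * 1 :=
            mul_le_mul (hψ1 t) (habs t) (abs_nonneg _) (by norm_num)
          _ = 1 := by norm_num
      · rw [Set.indicator_of_notMem ht, hψsupp t ht]
        norm_num
    have iφ : Integrable (fun t => φ t * h0 t) volume := by
      apply integrable_dom (A := a) (B := b) (C := 1)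
        ((hφm.mul hmeas).aestronglyMeasurable)
      intro t
      rw [Pi.mul_apply, abs_mul]
      by_cases ht : t ∈ Set.Ioc a b
      · rw [Set.indicator_of_mem ht]
        calc |φ t| * |h0 t| ≤ 1 * 1 :=
            mul_le_mul (hφ1 t) (habs t) (abs_nonneg _) (by norm_num)
          _ = 1 := by norm_num
      · rw [Set.indicator_of_notMem ht, hφsupp t ht]
        norm_num
    have idiff : Integrable (fun t => (ψ t - φ t) * h0 t) volume := by
      have : (fun t => (ψ t - φ t) * h0 t) = fun t => ψ t * h0 t - φ t * h0 t := by
        funext t; ring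
      rw [this]
      exact iψ.sub iφ
    -- X = ∫ ψ h0
    have hXψ : X = ∫ t, ψ t * h0 t := by
      rw [hX, ← integral_indicator measurableSet_Ioc]
      congr 1
      funext t
      rw [hψh t]
    -- split
    have hsplit : (∫ t, ψ t * h0 t) = (∫ t, φ t * h0 t) + ∫ t, (ψ t - φ t) * h0 t := by
      rw [← integral_add iφ idiff]
      congr 1
      funext t
      ring
    have hb1 : (∫ t, φ t * h0 t) ≤ c := by
      have heq : (fun t => φ t * h0 t) = fun t => -(φ t * (cdf β t - cdf α t)) := by
        funext t; rw [hh0]; ring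
      calc (∫ t, φ t * h0 t) ≤ |∫ t, φ t * h0 t| := le_abs_self _
        _ = |∫ t, φ t * (cdf β t - cdf α t)| := by rw [heq, integral_neg, abs_neg]
        _ ≤ c := hc φ hφPhi
    have hb2 : (∫ t, (ψ t - φ t) * h0 t) ≤ ε := by
      calc (∫ t, (ψ t - φ t) * h0 t) ≤ |∫ t, (ψ t - φ t) * h0 t| := le_abs_self _
        _ ≤ ∫ t, |(ψ t - φ t) * h0 t| := by
            simpa only [Real.norm_eq_abs] using
              norm_integral_le_integral_norm (μ := volume) (fun t => (ψ t - φ t) * h0 t)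
        _ ≤ ∫ t, |φ t - ψ t| := by
            apply integral_mono idiff.abs hφψint
            intro t
            dsimp only
            rw [abs_mul, abs_sub_comm (ψ t)]
            calc |φ t - ψ t| * |h0 t| ≤ |φ t - ψ t| * 1 :=
                mul_le_mul_of_nonneg_left (habs t) (abs_nonneg _)
              _ = |φ t - ψ t| := mul_one _
        _ ≤ ε := hφψ
    have : X ≤ c + ε := by
      rw [hXψ, hsplit]
      exact add_le_add hb1 hb2
    rw [hε] at this
    linarith
  -- monotone convergence
  have hsup : ∫⁻ t, ENNReal.ofReal |h0 t|
      = ⨆ n : ℕ, ∫⁻ t in Set.Ioc (-(n:ℝ)) n, ENNReal.ofReal |h0 t| := by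
    have hrw : ∀ n : ℕ, ∫⁻ t in Set.Ioc (-(n:ℝ)) n, ENNReal.ofReal |h0 t|
        = ∫⁻ t, (Set.Ioc (-(n:ℝ)) n).indicator (fun t => ENNReal.ofReal |h0 t|) t := by
      intro n
      rw [lintegral_indicator measurableSet_Ioc]
    simp only [hrw]
    rw [← lintegral_iSup]
    · congr 1
      funext t
      apply le_antisymm
      · obtain ⟨n, hn⟩ := exists_nat_gt |t|
        apply le_iSup_of_le n
        rw [Set.indicator_of_mem]
        rw [abs_lt] at hn
        exact ⟨by linarith [hn.1], by linarith [hn.2]⟩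
      · exact iSup_le (fun n => Set.indicator_le_self _ _ t)
    · intro n
      exact (ENNReal.measurable_ofReal.comp hmeas.abs).indicator measurableSet_Ioc
    · intro n m hnm t
      apply Set.indicator_le_indicator_of_subset
      · apply Set.Ioc_subset_Ioc
        · exact neg_le_neg (Nat.cast_le.2 hnm)
        · exact Nat.cast_le.2 hnm
      · exact fun _ => zero_le
  rw [hsup]
  exact iSup_le key

end Aux

/-- If a Markov process `M` with transition kernels `π s t` maps bounded 1-Lipschitz functions to
1-Lipschitz functions under conditional expectation, then its transition kernels are
1-Lipschitz in Wasserstein-1 distance, on a set of full measure under the law of `M s`. -/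
theorem lipschitz_markov_kernel {Ω : Type*} {mΩ : MeasurableSpace Ω} {μ : Measure Ω}
    [IsProbabilityMeasure μ] (ℱ : Filtration ℝ mΩ) (M : ℝ → Ω → ℝ)
    (hadp : Adapted ℱ M)
    (π : ℝ → ℝ → Kernel ℝ ℝ) (hπ : ∀ s t, IsMarkovKernel (π s t))
    (htrans : ∀ s t : ℝ, s ≤ t → ∀ f : ℝ → ℝ, Measurable f →
      Bornology.IsBounded (Set.range f) →
      μ[(fun ω => f (M t ω)) | ℱ s] =ᵐ[μ] fun ω => ∫ y, f y ∂(π s t (M s ω)))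
    (hLipMarkov : ∀ s t : ℝ, s ≤ t → ∀ f : ℝ → ℝ, LipschitzWith 1 f →
      Bornology.IsBounded (Set.range f) →
      ∃ g : ℝ → ℝ, LipschitzWith 1 g ∧
        μ[(fun ω => f (M t ω)) | ℱ s] =ᵐ[μ] fun ω => g (M s ω)) :
    ∀ s t : ℝ, s ≤ t → ∃ S : Set ℝ, μ.map (M s) Sᶜ = 0 ∧
      ∀ x ∈ S, ∀ y ∈ S, x ≤ y →
        W1 (π s t x) (π s t y) ≤ ENNReal.ofReal (y - x) := by
  classical
  intro s t hst
  haveI := hπ s t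
  have hMs : Measurable (M s) := (hadp s).mono (ℱ.le s) le_rfl
  -- a full-measure set for each test function
  have key : ∀ φ : ℝ → ℝ, φ ∈ Phi → ∃ S0 : Set ℝ, (μ.map (M s)) S0ᶜ = 0 ∧
      ∀ x ∈ S0, ∀ y ∈ S0,
        |(∫ z, Gf φ z ∂(π s t x)) - ∫ z, Gf φ z ∂(π s t y)| ≤ dist x y := by
    intro φ hφPhi
    obtain ⟨hφm, hφ1, a, b, hφsupp⟩ := Phi_spec hφPhi
    have hlip := Gf_lip hφm hφ1 hφsupp
    have hbdd := Gf_range_bdd hφm hφ1 hφsupp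
    obtain ⟨g, hg, hgae⟩ := hLipMarkov s t hst (Gf φ) hlip hbdd
    have htr := htrans s t hst (Gf φ) hlip.continuous.measurable hbdd
    have hae : ∀ᵐ ω ∂μ, (∫ z, Gf φ z ∂(π s t (M s ω))) = g (M s ω) := by
      filter_upwards [htr, hgae] with ω h1 h2
      rw [← h1, h2]
    set S0 := {x : ℝ | (∫ z, Gf φ z ∂(π s t x)) = g x} with hS0
    have hS0m : MeasurableSet S0 := by
      apply measurableSet_eq_fun
      · exact (MeasureTheory.StronglyMeasurable.integral_kernel_prod_right
          (κ := π s t) (f := fun _ z => Gf φ z)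
          (hlip.continuous.comp continuous_snd).stronglyMeasurable).measurable
      · exact hg.continuous.measurable
    refine ⟨S0, ?_, ?_⟩
    · rw [Measure.map_apply hMs hS0m.compl]
      exact ae_iff.1 hae
    · intro x hx y hy
      have e1 : (∫ z, Gf φ z ∂(π s t x)) = g x := hx
      have e2 : (∫ z, Gf φ z ∂(π s t y)) = g y := hy
      rw [e1, e2]
      calc |g x - g y| = dist (g x) (g y) := (Real.dist_eq _ _).symm
        _ ≤ 1 * dist x y := by
            have := hg.dist_le_mul x y
            simpa using this
        _ = dist x y := one_mul _
  choose T hT0 hT using key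
  set T' : (ℝ → ℝ) → Set ℝ := fun φ => if h : φ ∈ Phi then T φ h else Set.univ with hT'
  refine ⟨⋂ φ ∈ Phi, T' φ, ?_, ?_⟩
  · rw [Set.compl_iInter₂]
    rw [measure_biUnion_null_iff Phi_countable]
    intro φ hφ
    simp only [hT', dif_pos hφ]
    exact hT0 φ hφ
  · intro x hx y hy hxy
    haveI : IsProbabilityMeasure (π s t x) := (hπ s t).isProbabilityMeasure x
    haveI : IsProbabilityMeasure (π s t y) := (hπ s t).isProbabilityMeasure y
    calc W1 (π s t x) (π s t y)
        ≤ ∫⁻ u, ENNReal.ofReal |cdf (π s t x) u - cdf (π s t y) u| := W1_le_cdf _ _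
      _ ≤ ENNReal.ofReal (y - x) := by
          apply l1_bound _ _ (by linarith)
          intro φ hφPhi
          have hxT : x ∈ T φ hφPhi := by
            have := Set.mem_iInter₂.1 hx φ hφPhi
            simpa only [hT', dif_pos hφPhi] using this
          have hyT : y ∈ T φ hφPhi := by
            have := Set.mem_iInter₂.1 hy φ hφPhi
            simpa only [hT', dif_pos hφPhi] using this
          obtain ⟨hφm, hφ1, a, b, hφsupp⟩ := Phi_spec hφPhi
          have hdiff := Gf_diff hφm hφ1 hφsupp (π s t x) (π s t y)
          rw [← hdiff]
          calc |(∫ z, Gf φ z ∂(π s t x)) - ∫ z, Gf φ z ∂(π s t y)| ≤ dist x y :=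
              hT φ hφPhi x hxT y hyT
            _ = y - x := by
                rw [Real.dist_eq, abs_of_nonpos (by linarith)]
                ring
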